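/- Let G be a finite connected simple graph with an injective edge-weight function w : E(G) → ℝ, and let T be a minimum spanning tree of G, i.e., a connected spanning subgraph of G with no cycles minimizing the total edge weight among all such subgraphs. Then for all vertices u, v of G and every real t: G contains a u–v path all of whose edges have weight less than t if and only if T contains a u–v path all of whose edges have weight less than t. -/

import Mathlib

open scoped Classical

open SimpleGraph in
/-- In a connected graph `T`, after deleting one edge `s(x,y)`, every vertex can still
reach `x` or `y`. -/
lemma aux_reach_or {V : Type} {T : SimpleGraph V} (x y : V) {z c : V} (q : T.Walk z c) :
    (T.deleteEdges {s(x, y)}).Reachable z c ∨ (T.deleteEdges {s(x, y)}).Reachable z x ∨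
      (T.deleteEdges {s(x, y)}).Reachable z y := by
  induction q with
  | nil => exact Or.inl (Reachable.refl _)
  | cons h q ih =>
    rename_i z' d _
    by_cases hc : s(z', d) = s(x, y)
    · rw [Sym2.eq_iff] at hc
      rcases hc with ⟨rfl, rfl⟩ | ⟨rfl, rfl⟩
      · exact Or.inr (Or.inl (Reachable.refl _))
      · exact Or.inr (Or.inr (Reachable.refl _))
    · have hadj : (T.deleteEdges {s(x, y)}).Adj z' d := by
        rw [SimpleGraph.deleteEdges_adj]
        exact ⟨h, by simpa using hc⟩
      rcases ih with h1 | h1 | h1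
      · exact Or.inl (hadj.reachable.trans h1)
      · exact Or.inr (Or.inl (hadj.reachable.trans h1))
      · exact Or.inr (Or.inr (hadj.reachable.trans h1))

/-- Version ending at `x`. -/
lemma aux_reach_or' {V : Type} {T : SimpleGraph V} (hTconn : T.Connected) (x y z : V) :
    (T.deleteEdges {s(x, y)}).Reachable z x ∨ (T.deleteEdges {s(x, y)}).Reachable z y := by
  obtain ⟨q⟩ := hTconn z x
  rcases aux_reach_or x y q with h | h | h
  · exact Or.inl h
  · exact Or.inl h
  · exact Or.inr h

open SimpleGraph in
/-- An acyclic graph stays acyclic when passing to a subgraph. -/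
lemma aux_acyclic_mono {V : Type} {T T' : SimpleGraph V} (h : T' ≤ T)
    (hT : T.IsAcyclic) : T'.IsAcyclic := by
  intro z c hc
  exact hT (c.transfer T (fun e he => edgeSet_mono h (c.edges_subset_edgeSet he)))
    (hc.transfer _)

/-- if `T` is a minimum spanning tree of a connected weighted graph `G` with
injective edge weights, then for all vertices `u`, `v` and every threshold `t`, `G` has a
`u`–`v` path all of whose edges weigh less than `t` iff `T` has one. -/
theorem mst_preserves_bottleneck_paths {V : Type} [Fintype V] [DecidableEq V]
    (G : SimpleGraph V) (hG : G.Connected)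
    (w : Sym2 V → ℝ)
    (hinj : ∀ e ∈ G.edgeSet, ∀ e' ∈ G.edgeSet, w e = w e' → e = e')
    (T : SimpleGraph V) (hTle : T ≤ G) (hTconn : T.Connected) (hTacyc : T.IsAcyclic)
    (hTmin : ∀ T' : SimpleGraph V, T' ≤ G → T'.Connected → T'.IsAcyclic →
      (∑ᶠ e ∈ T.edgeSet, w e) ≤ ∑ᶠ e ∈ T'.edgeSet, w e)
    (u v : V) (t : ℝ) :
    (∃ p : G.Walk u v, p.IsPath ∧ ∀ e ∈ p.edges, w e < t) ↔
      (∃ p : T.Walk u v, p.IsPath ∧ ∀ e ∈ p.edges, w e < t) := by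
  classical
  constructor
  · rintro ⟨p, hp, hpt⟩
    by_contra h2
    push_neg at h2
    obtain ⟨q0⟩ := hTconn u v
    set tp : T.Path u v := q0.toPath with htp
    obtain ⟨e, he, hwe⟩ := h2 tp.val tp.property
    obtain ⟨x, y⟩ := e
    have hxyT : T.Adj x y := (tp.val).adj_of_mem_edges he
    set T' : SimpleGraph V := T.deleteEdges {s(x, y)} with hT'def
    have hT'le : T' ≤ T := SimpleGraph.deleteEdges_le _
    have henotT' : s(x, y) ∉ T'.edgeSet := by
      rw [hT'def, SimpleGraph.edgeSet_deleteEdges]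
      simp
    -- u and v are not T'-reachable
    have hnotuv : ¬ T'.Reachable u v := by
      rintro ⟨q'⟩
      set q1 : T'.Path u v := q'.toPath with hq1
      have hq1T : ∀ e ∈ q1.val.edges, e ∈ T.edgeSet :=
        fun e he' => SimpleGraph.edgeSet_mono hT'le (q1.val.edges_subset_edgeSet he')
      have hpath : (q1.val.transfer T hq1T).IsPath := q1.property.transfer _
      have hup := hTacyc.path_unique (⟨q1.val.transfer T hq1T, hpath⟩ : T.Path u v) tp
      have heq : (q1.val.transfer T hq1T).edges = tp.val.edges :=
        congrArg (fun r : T.Path u v => r.val.edges) hup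
      rw [SimpleGraph.Walk.edges_transfer] at heq
      have : s(x, y) ∈ q1.val.edges := by rw [heq]; exact he
      exact henotT' (q1.val.edges_subset_edgeSet this)
    -- boundary dart of p
    obtain ⟨d, hd, hd1, hd2⟩ := p.exists_boundary_dart {z | T'.Reachable u z}
      (SimpleGraph.Reachable.refl u) hnotuv
    set a := d.fst with ha
    set b := d.snd with hb
    have hab : G.Adj a b := d.adj
    have hfmem : s(a, b) ∈ p.edges := by
      have : d.edge ∈ p.edges := List.mem_map_of_mem (f := SimpleGraph.Dart.edge) hd
      exact this
    have hft : w s(a, b) < t := hpt _ hfmem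
    have hnab : ¬ T'.Reachable a b := fun h => hd2 (hd1.trans h)
    have haneb : a ≠ b := hab.ne
    set T'' : SimpleGraph V := T' ⊔ SimpleGraph.edge a b with hT''def
    have hedgele : SimpleGraph.edge a b ≤ G := by
      intro c d' hcd
      rw [SimpleGraph.edge_adj] at hcd
      rcases hcd.1 with ⟨rfl, rfl⟩ | ⟨rfl, rfl⟩
      · exact hab
      · exact hab.symm
    have hT''le : T'' ≤ G := sup_le (hT'le.trans hTle) hedgele
    have hT''edgeSet : T''.edgeSet = T'.edgeSet ∪ {s(a, b)} := by
      rw [hT''def, SimpleGraph.edgeSet_sup, SimpleGraph.edge_edgeSet_of_ne haneb]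
    have hT''adj : T''.Adj a b := by
      rw [hT''def, SimpleGraph.sup_adj, SimpleGraph.edge_adj]
      exact Or.inr ⟨Or.inl ⟨rfl, rfl⟩, haneb⟩
    -- connectivity of T''
    have hxy'' : T''.Reachable x y := by
      rcases aux_reach_or' hTconn x y a with hax | hay
      · have hby : T'.Reachable b y :=
          (aux_reach_or' hTconn x y b).resolve_left (fun hbx => hnab (hax.trans hbx.symm))
        exact ((hax.symm.mono le_sup_left).trans hT''adj.reachable).trans
          (hby.symm.mono le_sup_left).symm
      · have hbx : T'.Reachable b x :=
          (aux_reach_or' hTconn x y b).resolve_right (fun hby => hnab (hay.trans hby.symm))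
        exact ((hbx.symm.mono le_sup_left).trans hT''adj.symm.reachable).trans
          (hay.mono le_sup_left)
    have hreachx : ∀ z, T''.Reachable z x := by
      intro z
      rcases aux_reach_or' hTconn x y z with h1 | h1
      · exact h1.mono le_sup_left
      · exact (h1.mono le_sup_left).trans hxy''.symm
    have hT''conn : T''.Connected := by
      rw [SimpleGraph.connected_iff]
      exact ⟨fun z z' => (hreachx z).trans (hreachx z').symm, hTconn.nonempty⟩
    -- acyclicity of T''
    have hT'acyc : T'.IsAcyclic := aux_acyclic_mono hT'le hTacyc
    have hT''acyc : T''.IsAcyclic := by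
      intro z c hc
      by_cases hf : s(a, b) ∈ c.edges
      · have hkey := SimpleGraph.adj_and_reachable_delete_edges_iff_exists_cycle.mpr
          ⟨z, c, hc, hf⟩
        have hle' : (T'' \ SimpleGraph.fromEdgeSet {s(a, b)}) ≤ T' := by
          intro c' d' hcd
          rw [SimpleGraph.sdiff_adj, SimpleGraph.sup_adj] at hcd
          rcases hcd.1 with h1 | h1
          · exact h1
          · exfalso
            apply hcd.2
            rw [SimpleGraph.fromEdgeSet_adj]
            rw [SimpleGraph.edge_adj] at h1
            rcases h1 with ⟨⟨rfl, rfl⟩ | ⟨rfl, rfl⟩, hne⟩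
            · exact ⟨rfl, hne⟩
            · exact ⟨Sym2.eq_swap, hne⟩
        exact hnab (hkey.2.mono hle')
      · have hedges : ∀ e ∈ c.edges, e ∈ T'.edgeSet := by
          intro e he'
          have := c.edges_subset_edgeSet he'
          rw [hT''edgeSet] at this
          rcases this with h1 | h1
          · exact h1
          · exact absurd (h1 ▸ he') hf
        exact hT'acyc (c.transfer T' hedges) (hc.transfer _)
    -- weight comparison
    have hmin := hTmin T'' hT''le hT''conn hT''acyc
    have heT : s(x, y) ∈ T.edgeSet := hxyT
    have hfnotT : s(a, b) ∉ T.edgeSet := by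
      intro hfT
      have : s(a, b) ∈ T'.edgeSet ∨ s(a, b) = s(x, y) := by
        rw [hT'def, SimpleGraph.edgeSet_deleteEdges]
        by_cases h : s(a, b) = s(x, y)
        · exact Or.inr h
        · exact Or.inl ⟨hfT, by simpa using h⟩
      rcases this with h1 | h1
      · exact hnab (SimpleGraph.Adj.reachable h1)
      · rw [h1] at hft; linarith
    have hT'edgeSet : T'.edgeSet = T.edgeSet \ {s(x, y)} := by
      rw [hT'def, SimpleGraph.edgeSet_deleteEdges]
    have hfinT : (T.edgeSet).Finite := Set.toFinite _
    have hfinT'' : (T''.edgeSet).Finite := Set.toFinite _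
    rw [finsum_mem_eq_finite_toFinset_sum _ hfinT, finsum_mem_eq_finite_toFinset_sum _ hfinT'']
      at hmin
    have hfinset : hfinT''.toFinset = insert s(a, b) (hfinT.toFinset.erase s(x, y)) := by
      ext e'
      simp only [Set.Finite.mem_toFinset, Finset.mem_insert, Finset.mem_erase,
        hT''edgeSet, hT'edgeSet, Set.mem_union, Set.mem_diff, Set.mem_singleton_iff]
      tauto
    rw [hfinset, Finset.sum_insert (by
      simp only [Finset.mem_erase, Set.Finite.mem_toFinset]
      exact fun h => hfnotT h.2)] at hmin
    have herase : ∑ e' ∈ hfinT.toFinset.erase s(x, y), w e' + w s(x, y)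
        = ∑ e' ∈ hfinT.toFinset, w e' :=
      Finset.sum_erase_add _ _ (by simpa using heT)
    linarith
  · rintro ⟨p, hp, hpt⟩
    have hedges : ∀ e ∈ p.edges, e ∈ G.edgeSet :=
      fun e he => SimpleGraph.edgeSet_mono hTle (p.edges_subset_edgeSet he)
    exact ⟨p.transfer G hedges, hp.transfer _,
      fun e he => hpt e (by rwa [SimpleGraph.Walk.edges_transfer] at he)⟩
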